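/- Let t ≥ 1 and let i : Fin t → ℤ be an injective function (t distinct integer inputs). Consider the map Φ from (Fin t → AddCircle (1 : ℝ)) to itself defined by Φ(a)_k = Σ_{j=0}^{t−1} (i k)^j • a_j, where (i k)^j • a_j denotes integer scalar multiplication on the circle ℝ/ℤ. Then Φ is measure-preserving with respect to the product of the Haar probability measures on the t copies of AddCircle 1. Equivalently, if a = (a_0, …, a_{t−1}) is uniformly distributed in [0,1)^t, then the vector (f_a(i_1), …, f_a(i_t)), where f_a(x) = Σ_{j=0}^{t−1} a_j x^j mod 1, is uniformly distributed in [0,1)^t. -/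

import Mathlib

open MeasureTheory

instance : Fact ((0 : ℝ) < 1) := ⟨one_pos⟩

/-- The hash family `a ↦ (x ↦ ∑ j, a j • x^j mod 1)` is `t`-wise independent with
uniform marginals: for `t` distinct integer inputs `i 0, …, i (t-1)`, the map
sending a uniformly random coefficient vector `a ∈ (ℝ/ℤ)^t` to the vector of hash
values `(f_a (i 0), …, f_a (i (t-1)))` preserves the product Haar probability
measure on the torus `(ℝ/ℤ)^t`. -/
theorem vandermonde_hash_measurePreserving
    (t : ℕ) (ht : 1 ≤ t) (i : Fin t → ℤ) (hi : Function.Injective i) :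
    MeasurePreserving
      (fun (a : Fin t → AddCircle (1 : ℝ)) (k : Fin t) =>
        ∑ j : Fin t, ((i k) ^ (j : ℕ)) • a j)
      (Measure.pi fun _ => (volume : Measure (AddCircle (1 : ℝ))))
      (Measure.pi fun _ => (volume : Measure (AddCircle (1 : ℝ)))) := by
  set Φ : (Fin t → AddCircle (1:ℝ)) →+ (Fin t → AddCircle (1:ℝ)) :=
    { toFun := fun a k => ∑ j : Fin t, ((i k) ^ (j : ℕ)) • a j
      map_zero' := by ext k; simp
      map_add' := by intro a b; ext k; simp [smul_add, Finset.sum_add_distrib] } with hΦ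
  have hcont : Continuous Φ := by
    show Continuous fun a : Fin t → AddCircle (1:ℝ) => fun k => ∑ j : Fin t, ((i k) ^ (j : ℕ)) • a j
    apply continuous_pi; intro k
    exact continuous_finset_sum _ fun j _ =>
      ((continuous_apply j).zsmul ((i k) ^ (j : ℕ)) : Continuous fun a : Fin t → AddCircle (1:ℝ) => ((i k) ^ (j : ℕ)) • a j)
  have haar : Measure.IsAddHaarMeasure (Measure.pi fun _ : Fin t => (volume : Measure (AddCircle (1:ℝ)))) :=
    { }
  have hsurj : Function.Surjective Φ := by
    intro b
    choose y hy using fun k => Quot.exists_rep (b k)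
    set M : Matrix (Fin t) (Fin t) ℝ := Matrix.vandermonde (fun k => (i k : ℝ)) with hM
    have hdet : M.det ≠ 0 := by
      rw [hM, Matrix.det_vandermonde]
      apply Finset.prod_ne_zero_iff.2
      intro a _
      apply Finset.prod_ne_zero_iff.2
      intro c hc
      have : a < c := Finset.mem_Ioi.mp hc
      have hne : (i a : ℝ) ≠ (i c : ℝ) := fun h => this.ne (hi (Int.cast_injective h))
      intro h
      exact hne (by linarith [sub_eq_zero.mp h])
    set x : Fin t → ℝ := M⁻¹.mulVec y with hx
    refine ⟨fun j => (x j : AddCircle (1:ℝ)), ?_⟩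
    funext k
    have hπ : ∀ (n : ℤ) (r : ℝ), n • ((r : AddCircle (1:ℝ))) = (((n : ℝ) * r : ℝ) : AddCircle (1:ℝ)) := by
      intro n r
      rw [← zsmul_eq_mul]
      exact ((QuotientAddGroup.mk' _ : ℝ →+ AddCircle (1:ℝ)).map_zsmul n r).symm
    show ∑ j : Fin t, ((i k) ^ (j : ℕ)) • ((x j : ℝ) : AddCircle (1:ℝ)) = b k
    calc ∑ j : Fin t, ((i k) ^ (j : ℕ)) • ((x j : ℝ) : AddCircle (1:ℝ))
        = ∑ j : Fin t, ((((i k : ℝ) ^ (j:ℕ)) * x j : ℝ) : AddCircle (1:ℝ)) := by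
          refine Finset.sum_congr rfl fun j _ => ?_
          rw [hπ]; push_cast; ring_nf
      _ = ((∑ j : Fin t, (i k : ℝ) ^ (j:ℕ) * x j : ℝ) : AddCircle (1:ℝ)) := by
          exact (map_sum (QuotientAddGroup.mk' _ : ℝ →+ AddCircle (1:ℝ)) _ _).symm
      _ = ((M.mulVec x k : ℝ) : AddCircle (1:ℝ)) := by
          congr 1
      _ = b k := by
          rw [hx, Matrix.mulVec_mulVec, Matrix.mul_nonsing_inv M (isUnit_iff_ne_zero.2 hdet), Matrix.one_mulVec]
          exact hy k
  exact AddMonoidHom.measurePreserving hcont hsurj rfl
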